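/- VCG payment formula in parallel networks (Lemma, VCG payment): Consider a sorted parallel instance additionally satisfying Σ_{j=1}^{m−1} c_j < n ≤ Σ_{j=1}^m c_j. For a set S of users, let OPT(S) denote the minimum of Σ_{u∈S} v_u l_{σ(u)} over all maps σ : S → {1,...,m} with |σ^{-1}(j)| ≤ c_j for each edge j. For 1 ≤ j ≤ m−1 let b(j) := 1 + Σ_{j'≤j} c_{j'}. Then for every user u ∈ {1,...,n}, writing e := σ*(u) for u's edge under the greedy assignment, OPT({1,...,n}) − OPT({1,...,n} \ {u}) = v_u·l_e + Σ_{j=e}^{m−1} v_{b(j)} (l_{j+1} − l_j); equivalently, the VCG payment of user u equals Σ_{j=e}^{m−1} v_{b(j)} (l_{j+1} − l_j). -/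

import Mathlib

open Finset

namespace VCGAux

lemma sum_telescope_Ico (l : ℕ → ℝ) {a b : ℕ} (h : a ≤ b) :
    ∑ j ∈ Finset.Ico a b, (l (j + 1) - l j) = l b - l a := by
  induction b, h using Nat.le_induction with
  | base => simp
  | succ b hb ih =>
      rw [Finset.sum_Ico_succ_top hb, ih]; ring

lemma tail_sum (w : ℕ → ℝ) :
    ∀ N : ℕ, (∀ t t', 1 ≤ t → t ≤ t' → t' ≤ N → w t' ≤ w t) →
    (∀ t, 1 ≤ t → t ≤ N → 0 ≤ w t) →
    ∀ T ⊆ Finset.Icc 1 N, ∀ a : ℕ, N ≤ a + T.card →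
      ∑ t ∈ Finset.Icc (a + 1) N, w t ≤ ∑ t ∈ T, w t := by
  intro N
  induction N with
  | zero =>
      intro _ _ T hT a _
      have : T = ∅ := subset_empty.mp (by simpa using hT)
      simp [this, Finset.Icc_eq_empty_of_lt (by omega : (0:ℕ) < a + 1)]
  | succ N ih =>
      intro hmono hnn T hT a hcard
      have hmono' : ∀ t t', 1 ≤ t → t ≤ t' → t' ≤ N → w t' ≤ w t :=
        fun t t' h1 h2 h3 => hmono t t' h1 h2 (by omega)
      have hnn' : ∀ t, 1 ≤ t → t ≤ N → 0 ≤ w t :=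
        fun t h1 h2 => hnn t h1 (by omega)
      by_cases hN1 : N + 1 ∈ T
      · have hT' : T.erase (N + 1) ⊆ Finset.Icc 1 N := by
          intro t ht
          have h1 := hT (Finset.mem_of_mem_erase ht)
          have h2 := Finset.ne_of_mem_erase ht
          simp only [mem_Icc] at h1 ⊢; omega
        have hcard' : N ≤ a + (T.erase (N + 1)).card := by
          rw [Finset.card_erase_of_mem hN1]
          have : 1 ≤ T.card := Finset.card_pos.mpr ⟨_, hN1⟩
          omega
        have ihs := ih hmono' hnn' _ hT' a hcard'
        have hsplit : ∑ t ∈ T.erase (N + 1), w t + w (N + 1) = ∑ t ∈ T, w t :=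
          Finset.sum_erase_add T w hN1
        rcases le_or_gt (a + 1) (N + 1) with hle | hlt
        · rw [Finset.sum_Icc_succ_top hle]
          linarith
        · rw [Finset.Icc_eq_empty_of_lt hlt, Finset.sum_empty]
          apply Finset.sum_nonneg
          intro t ht
          have := hT ht; simp only [mem_Icc] at this
          exact hnn t this.1 this.2
      · have hT2 : T ⊆ Finset.Icc 1 N := by
          intro t ht
          have h1 := hT ht
          simp only [mem_Icc] at h1 ⊢
          have : t ≠ N + 1 := fun h => hN1 (h ▸ ht)
          omega
        have hcardT : T.card ≤ N := by
          have := Finset.card_le_card hT2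
          simpa [Nat.card_Icc] using this
        have ha : 1 ≤ a := by omega
        have ihs := ih hmono' hnn' _ hT2 (a - 1) (by omega)
        have hrw : a - 1 + 1 = a := by omega
        rw [hrw] at ihs
        refine le_trans ?_ ihs
        have hmap : Finset.Icc (a + 1) (N + 1) = (Finset.Icc a N).map (addRightEmbedding 1) := by
          rw [Finset.map_add_right_Icc]
        rw [hmap, Finset.sum_map]
        apply Finset.sum_le_sum
        intro t ht
        simp only [mem_Icc] at ht
        exact hmono t (t + 1) (by omega) (by omega) (by omega)

lemma decomp (m : ℕ) (l : ℕ → ℝ) (S : Finset ℕ) (w : ℕ → ℝ) (ρ : ℕ → ℕ)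
    (hρ : ∀ t ∈ S, ρ t ∈ Finset.Icc 1 m) :
    ∑ t ∈ S, w t * l (ρ t) =
      (∑ t ∈ S, w t) * l 1 +
        ∑ j ∈ Finset.Ico 1 m, (l (j + 1) - l j) * ∑ t ∈ S.filter (fun t => j < ρ t), w t := by
  have key : ∀ t ∈ S, w t * l (ρ t) =
      w t * l 1 + ∑ j ∈ Finset.Ico 1 m, (if j < ρ t then (l (j + 1) - l j) * w t else 0) := by
    intro t ht
    have h1 := Finset.mem_Icc.mp (hρ t ht)
    have hfil : (Finset.Ico 1 m).filter (fun j => j < ρ t) = Finset.Ico 1 (ρ t) := by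
      rw [Finset.Ico_filter_lt]
      congr 1
      omega
    have : ∑ j ∈ Finset.Ico 1 m, (if j < ρ t then (l (j + 1) - l j) * w t else 0)
        = ∑ j ∈ Finset.Ico 1 (ρ t), (l (j + 1) - l j) * w t := by
      rw [← Finset.sum_filter, hfil]
    rw [this, ← Finset.sum_mul, sum_telescope_Ico l h1.1]
    ring
  rw [Finset.sum_congr rfl key, Finset.sum_add_distrib, Finset.sum_mul, Finset.sum_comm]
  congr 1
  apply Finset.sum_congr rfl
  intro j _
  rw [← Finset.sum_filter, Finset.mul_sum]

end VCGAux

namespace VCGAux2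

noncomputable def Cf (c : ℕ → ℕ) (j : ℕ) : ℕ := ∑ j' ∈ Finset.Icc 1 j, c j'
noncomputable def Ef (c : ℕ → ℕ) (t : ℕ) : ℕ := sInf {j | t ≤ Cf c j}

variable {c : ℕ → ℕ} {m : ℕ}

lemma Cf_zero : Cf c 0 = 0 := by simp [Cf]

lemma Cf_mono : Monotone (Cf c) := fun i j h =>
  Finset.sum_le_sum_of_subset (Finset.Icc_subset_Icc_right h)

lemma Cf_succ (j : ℕ) : Cf c (j + 1) = Cf c j + c (j + 1) :=
  Finset.sum_Icc_succ_top (by omega) c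

lemma Cf_pred {j : ℕ} (hj : 1 ≤ j) : Cf c j = Cf c (j - 1) + c j := by
  have := Cf_succ (c := c) (j - 1)
  have h : j - 1 + 1 = j := by omega
  rwa [h] at this

lemma Ef_le {t j : ℕ} (h : t ≤ Cf c j) : Ef c t ≤ j := Nat.sInf_le h

lemma le_Cf_Ef {t : ℕ} (h : t ≤ Cf c m) : t ≤ Cf c (Ef c t) :=
  Nat.sInf_mem (⟨m, h⟩ : {j | t ≤ Cf c j}.Nonempty)

lemma Ef_pos {t : ℕ} (h1 : 1 ≤ t) (h : t ≤ Cf c m) : 1 ≤ Ef c t := by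
  by_contra hc
  have h0 : Ef c t = 0 := by omega
  have := le_Cf_Ef (c := c) h
  rw [h0, Cf_zero] at this
  omega

lemma Cf_pred_lt {t : ℕ} (h1 : 1 ≤ t) (h : t ≤ Cf c m) : Cf c (Ef c t - 1) < t := by
  have hpos := Ef_pos (c := c) h1 h
  have hnot : Ef c t - 1 ∉ {j | t ≤ Cf c j} :=
    Nat.notMem_of_lt_sInf (show Ef c t - 1 < Ef c t by omega)
  simp only [Set.mem_setOf_eq, not_le] at hnot
  exact hnot

lemma Ef_eq {t j : ℕ} (h1 : 1 ≤ j) (hlo : Cf c (j - 1) < t) (hhi : t ≤ Cf c j) :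
    Ef c t = j := by
  have hle : Ef c t ≤ j := Ef_le hhi
  have hmem : t ≤ Cf c (Ef c t) := Nat.sInf_mem (⟨j, hhi⟩ : {j' | t ≤ Cf c j'}.Nonempty)
  by_contra hne
  have : Ef c t ≤ j - 1 := by omega
  have := le_trans hmem (Cf_mono this)
  omega

lemma Ef_mem {N t : ℕ} (hm : 1 ≤ m) (hN : N ≤ Cf c m) (ht : t ∈ Finset.Icc 1 N) :
    Ef c t ∈ Finset.Icc 1 m := by
  simp only [mem_Icc] at ht ⊢
  exact ⟨Ef_pos ht.1 (le_trans ht.2 hN), Ef_le (le_trans ht.2 hN)⟩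

lemma Ef_card {N : ℕ} (hN : N ≤ Cf c m) (j : ℕ) :
    ((Finset.Icc 1 N).filter (fun t => Ef c t = j)).card ≤ c j := by
  rcases Nat.eq_zero_or_pos j with hj | hj
  · have : (Finset.Icc 1 N).filter (fun t => Ef c t = j) = ∅ := by
      apply Finset.filter_eq_empty_iff.mpr
      intro t ht
      simp only [mem_Icc] at ht
      have := Ef_pos (c := c) ht.1 (le_trans ht.2 hN)
      omega
    simp [this]
  · have hsub : (Finset.Icc 1 N).filter (fun t => Ef c t = j) ⊆
        Finset.Ioc (Cf c (j - 1)) (Cf c j) := by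
      intro t ht
      simp only [mem_filter, mem_Icc] at ht
      obtain ⟨⟨ht1, htN⟩, hE⟩ := ht
      have h1 := Cf_pred_lt (c := c) ht1 (le_trans htN hN)
      have h2 := le_Cf_Ef (c := c) (le_trans htN hN)
      rw [hE] at h1 h2
      simp only [mem_Ioc]
      exact ⟨h1, h2⟩
    calc ((Finset.Icc 1 N).filter (fun t => Ef c t = j)).card
        ≤ (Finset.Ioc (Cf c (j - 1)) (Cf c j)).card := Finset.card_le_card hsub
      _ = Cf c j - Cf c (j - 1) := Nat.card_Ioc _ _
      _ ≤ c j := by rw [Cf_pred hj]; omega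

lemma Ef_filter_lt {N : ℕ} (hN : N ≤ Cf c m) (j : ℕ) :
    (Finset.Icc 1 N).filter (fun t => j < Ef c t) = Finset.Icc (Cf c j + 1) N := by
  ext t
  simp only [mem_filter, mem_Icc]
  constructor
  · rintro ⟨⟨h1, h2⟩, hj⟩
    refine ⟨?_, h2⟩
    by_contra hc
    have : t ≤ Cf c j := by omega
    have := Ef_le (c := c) this
    omega
  · rintro ⟨h1, h2⟩
    have ht1 : 1 ≤ t := by
      have : 0 < Cf c j + 1 := by omega
      omega
    refine ⟨⟨ht1, h2⟩, ?_⟩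
    by_contra hc
    have hle : Ef c t ≤ j := by omega
    have := le_trans (le_Cf_Ef (c := c) (le_trans h2 hN)) (Cf_mono hle)
    omega

lemma cap_count (S : Finset ℕ) (τ : ℕ → ℕ) (hmem : ∀ t ∈ S, 1 ≤ τ t)
    (hcap : ∀ j, (S.filter (fun t => τ t = j)).card ≤ c j) (j : ℕ) :
    (S.filter (fun t => τ t ≤ j)).card ≤ Cf c j := by
  have hsub : S.filter (fun t => τ t ≤ j) ⊆
      (Finset.Icc 1 j).biUnion (fun j' => S.filter (fun t => τ t = j')) := by
    intro t ht
    simp only [mem_filter] at ht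
    apply Finset.mem_biUnion.mpr
    exact ⟨τ t, Finset.mem_Icc.mpr ⟨hmem t ht.1, ht.2⟩, Finset.mem_filter.mpr ⟨ht.1, rfl⟩⟩
  calc (S.filter (fun t => τ t ≤ j)).card
      ≤ ((Finset.Icc 1 j).biUnion (fun j' => S.filter (fun t => τ t = j'))).card :=
        Finset.card_le_card hsub
    _ ≤ ∑ j' ∈ Finset.Icc 1 j, (S.filter (fun t => τ t = j')).card := Finset.card_biUnion_le
    _ ≤ Cf c j := Finset.sum_le_sum (fun j' _ => hcap j')

end VCGAux2

namespace VCGMain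
open VCGAux VCGAux2

lemma greedy_lb {c : ℕ → ℕ} {m N : ℕ} (l : ℕ → ℝ) (w : ℕ → ℝ)
    (hm : 1 ≤ m)
    (hl : ∀ j j', 1 ≤ j → j ≤ j' → j' ≤ m → l j ≤ l j')
    (hw_mono : ∀ t t', 1 ≤ t → t ≤ t' → t' ≤ N → w t' ≤ w t)
    (hw_nn : ∀ t, 1 ≤ t → t ≤ N → 0 ≤ w t)
    (hN : N ≤ Cf c m)
    (τ : ℕ → ℕ) (hτ : ∀ t ∈ Finset.Icc 1 N, τ t ∈ Finset.Icc 1 m)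
    (hτc : ∀ j, ((Finset.Icc 1 N).filter (fun t => τ t = j)).card ≤ c j) :
    ∑ t ∈ Finset.Icc 1 N, w t * l (Ef c t) ≤ ∑ t ∈ Finset.Icc 1 N, w t * l (τ t) := by
  rw [decomp m l _ w (Ef c) (fun t ht => Ef_mem hm hN ht),
      decomp m l _ w τ hτ]
  apply add_le_add_right
  apply Finset.sum_le_sum
  intro j hj
  simp only [mem_Ico] at hj
  have hd : 0 ≤ l (j + 1) - l j := by
    have := hl j (j + 1) hj.1 (by omega) (by omega)
    linarith
  apply mul_le_mul_of_nonneg_left _ hd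
  rw [Ef_filter_lt hN j]
  apply tail_sum w N hw_mono hw_nn _ (Finset.filter_subset _ _) (Cf c j)
  have hsplit := Finset.card_filter_add_card_filter_not
    (s := Finset.Icc 1 N) (p := fun t => j < τ t)
  have hneg : ((Finset.Icc 1 N).filter (fun t => ¬ j < τ t)).card ≤ Cf c j := by
    have : ((Finset.Icc 1 N).filter (fun t => ¬ j < τ t))
        = ((Finset.Icc 1 N).filter (fun t => τ t ≤ j)) := by
      apply Finset.filter_congr
      intro t _
      simp only [not_lt]
    rw [this]
    exact cap_count _ τ (fun t ht => (Finset.mem_Icc.mp (hτ t ht)).1) hτc j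
  have hcardIcc : (Finset.Icc 1 N).card = N := by simp [Nat.card_Icc]
  omega

end VCGMain


open VCGAux VCGAux2 VCGMain in

/-- **VCG payment formula in parallel networks**: in a sorted parallel instance in which
every edge is used by the greedy assignment (`Σ_{j=1}^{m−1} c_j < n ≤ Σ_{j=1}^m c_j`),
with `OPT S` the minimum cost of capacity-respecting assignments of the user set `S` and
`b(j) = 1 + Σ_{j'≤j} c_{j'}`, for every user `u` with greedy edge `e = σ*(u)` one has
`OPT({1,…,n}) − OPT({1,…,n} \ {u}) = v_u l_e + Σ_{j=e}^{m−1} v_{b(j)} (l_{j+1} − l_j)`;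
i.e. the VCG payment of `u` equals `Σ_{j=e}^{m−1} v_{b(j)} (l_{j+1} − l_j)`. -/
theorem vcg_payment_formula_parallel_networks
    (n m : ℕ) (hn : 1 ≤ n) (hm : 1 ≤ m)
    (v l : ℕ → ℝ) (c : ℕ → ℕ)
    (hv_sorted : ∀ u u', 1 ≤ u → u ≤ u' → u' ≤ n → v u' ≤ v u)
    (hv_nonneg : ∀ u, 1 ≤ u → u ≤ n → 0 ≤ v u)
    (hl_sorted : ∀ j j', 1 ≤ j → j ≤ j' → j' ≤ m → l j ≤ l j')
    (hc_pos : ∀ j, 1 ≤ j → j ≤ m → 1 ≤ c j)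
    (hlow : ∑ j ∈ Finset.Ico 1 m, c j < n)
    (hcap : n ≤ ∑ j ∈ Finset.Icc 1 m, c j)
    (b : ℕ → ℕ) (hb : ∀ j, b j = 1 + ∑ j' ∈ Finset.Icc 1 j, c j')
    (σstar : ℕ → ℕ)
    (hσstar_mem : ∀ u ∈ Finset.Icc 1 n, σstar u ∈ Finset.Icc 1 m)
    (hσstar_greedy : ∀ u ∈ Finset.Icc 1 n,
      ∑ j ∈ Finset.Ico 1 (σstar u), c j < u ∧ u ≤ ∑ j ∈ Finset.Icc 1 (σstar u), c j)
    (OPT : Finset ℕ → ℝ)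
    (hOPT : ∀ S ⊆ Finset.Icc 1 n,
      (∃ σ : ℕ → ℕ, (∀ u ∈ S, σ u ∈ Finset.Icc 1 m) ∧
          (∀ j, (S.filter fun u => σ u = j).card ≤ c j) ∧
          ∑ u ∈ S, v u * l (σ u) = OPT S) ∧
        ∀ σ : ℕ → ℕ, (∀ u ∈ S, σ u ∈ Finset.Icc 1 m) →
          (∀ j, (S.filter fun u => σ u = j).card ≤ c j) →
          OPT S ≤ ∑ u ∈ S, v u * l (σ u)) :
    ∀ u ∈ Finset.Icc 1 n,
      OPT (Finset.Icc 1 n) - OPT (Finset.Icc 1 n \ {u}) =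
        v u * l (σstar u) +
          ∑ j ∈ Finset.Ico (σstar u) m, v (b j) * (l (j + 1) - l j) := by
  intro u hu
  have hu' := Finset.mem_Icc.mp hu
  obtain ⟨hu1, hun⟩ := hu'
  have hnCm : n ≤ Cf c m := hcap
  have hn1Cm : n - 1 ≤ Cf c m := le_trans (Nat.sub_le n 1) hnCm
  -- σstar u = Ef c u
  have he := hσstar_greedy u hu
  have hemem := Finset.mem_Icc.mp (hσstar_mem u hu)
  have hIcoIcc : Finset.Ico 1 (σstar u) = Finset.Icc 1 (σstar u - 1) := by
    rw [← Finset.Ico_add_one_right_eq_Icc]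
    congr 1
    omega
  have hEu : Ef c u = σstar u := by
    apply Ef_eq hemem.1 _ he.2
    have h1 := he.1
    rwa [hIcoIcc] at h1
  -- Step B : value of OPT on the full set
  obtain ⟨⟨σ₀, hσ₀m, hσ₀c, hσ₀s⟩, hminN⟩ := hOPT (Finset.Icc 1 n) (Finset.Subset.refl _)
  have hB : OPT (Finset.Icc 1 n) = ∑ t ∈ Finset.Icc 1 n, v t * l (Ef c t) := by
    apply le_antisymm
    · exact hminN (Ef c) (fun t ht => Ef_mem hm hnCm ht) (fun j => Ef_card hnCm j)
    · rw [← hσ₀s]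
      exact greedy_lb l v hm hl_sorted hv_sorted hv_nonneg hnCm σ₀ hσ₀m hσ₀c
  -- Step C : value of OPT on the set without u
  obtain ⟨⟨σ₁, hσ₁m, hσ₁c, hσ₁s⟩, hminS⟩ :=
    hOPT (Finset.Icc 1 n \ {u}) Finset.sdiff_subset
  set S : Finset ℕ := Finset.Icc 1 n \ {u} with hSdef
  set s : ℕ → ℕ := fun t => if t < u then t else t + 1 with hsdef
  set r : ℕ → ℕ := fun x => if x < u then x else x - 1 with hrdef
  have hmemS : ∀ x, x ∈ S ↔ (1 ≤ x ∧ x ≤ n ∧ x ≠ u) := by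
    intro x
    simp only [hSdef, Finset.mem_sdiff, Finset.mem_Icc, Finset.mem_singleton]
    tauto
  have hs_mem : ∀ t ∈ Finset.Icc 1 (n - 1), s t ∈ S := by
    intro t ht
    have ht' := Finset.mem_Icc.mp ht
    rw [hmemS]
    simp only [hsdef]
    split_ifs <;> omega
  have hr_mem : ∀ x ∈ S, r x ∈ Finset.Icc 1 (n - 1) := by
    intro x hx
    rw [hmemS] at hx
    rw [Finset.mem_Icc]
    simp only [hrdef]
    split_ifs <;> omega
  have hrs : ∀ t ∈ Finset.Icc 1 (n - 1), r (s t) = t := by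
    intro t ht
    have ht' := Finset.mem_Icc.mp ht
    simp only [hsdef, hrdef]
    split_ifs <;> omega
  have hsr : ∀ x ∈ S, s (r x) = x := by
    intro x hx
    rw [hmemS] at hx
    simp only [hsdef, hrdef]
    split_ifs <;> omega
  have hs_le_n : ∀ t ∈ Finset.Icc 1 (n - 1), 1 ≤ s t ∧ s t ≤ n := by
    intro t ht
    have := hs_mem t ht
    rw [hmemS] at this
    exact ⟨this.1, this.2.1⟩
  have hreindex : ∀ f : ℕ → ℝ, ∑ x ∈ S, f x = ∑ t ∈ Finset.Icc 1 (n - 1), f (s t) := by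
    intro f
    exact Finset.sum_nbij' r s hr_mem hs_mem hsr hrs (fun x hx => by rw [hsr x hx])
  have hC : OPT S = ∑ t ∈ Finset.Icc 1 (n - 1), v (s t) * l (Ef c t) := by
    apply le_antisymm
    · have hmem' : ∀ x ∈ S, Ef c (r x) ∈ Finset.Icc 1 m :=
        fun x hx => Ef_mem hm hn1Cm (hr_mem x hx)
      have hcap' : ∀ j, (S.filter (fun x => Ef c (r x) = j)).card ≤ c j := by
        intro j
        have hinj : Set.InjOn r ↑(S.filter (fun x => Ef c (r x) = j)) := by
          intro a ha b' hb' hab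
          simp only [Finset.coe_filter, Set.mem_setOf_eq] at ha hb'
          rw [← hsr a ha.1, ← hsr b' hb'.1, hab]
        have hmaps : ∀ x ∈ S.filter (fun x => Ef c (r x) = j),
            r x ∈ (Finset.Icc 1 (n - 1)).filter (fun t => Ef c t = j) := by
          intro x hx
          simp only [Finset.mem_filter] at hx ⊢
          exact ⟨hr_mem x hx.1, hx.2⟩
        calc (S.filter (fun x => Ef c (r x) = j)).card
            ≤ ((Finset.Icc 1 (n - 1)).filter (fun t => Ef c t = j)).card :=
              Finset.card_le_card_of_injOn r hmaps hinj
          _ ≤ c j := Ef_card hn1Cm j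
      calc OPT S ≤ ∑ x ∈ S, v x * l (Ef c (r x)) := hminS _ hmem' hcap'
        _ = ∑ t ∈ Finset.Icc 1 (n - 1), v (s t) * l (Ef c (r (s t))) :=
            hreindex (fun x => v x * l (Ef c (r x)))
        _ = ∑ t ∈ Finset.Icc 1 (n - 1), v (s t) * l (Ef c t) := by
            apply Finset.sum_congr rfl
            intro t ht
            rw [hrs t ht]
    · rw [← hσ₁s, hreindex (fun x => v x * l (σ₁ x))]
      refine greedy_lb l (fun t => v (s t)) hm hl_sorted ?_ ?_ hn1Cm
        (fun t => σ₁ (s t)) ?_ ?_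
      · intro t t' h1 h2 h3
        have hst : s t ≤ s t' := by simp only [hsdef]; split_ifs <;> omega
        have h1' : 1 ≤ s t := by simp only [hsdef]; split_ifs <;> omega
        have h3' : s t' ≤ n := (hs_le_n t' (Finset.mem_Icc.mpr ⟨by omega, h3⟩)).2
        exact hv_sorted _ _ h1' hst h3'
      · intro t h1 h2
        have := hs_le_n t (Finset.mem_Icc.mpr ⟨h1, h2⟩)
        exact hv_nonneg _ this.1 this.2
      · intro t ht
        exact hσ₁m _ (hs_mem t ht)
      · intro j
        have hinj : Set.InjOn s ↑((Finset.Icc 1 (n - 1)).filter (fun t => σ₁ (s t) = j)) := by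
          intro a ha b' hb' hab
          simp only [Finset.coe_filter, Set.mem_setOf_eq] at ha hb'
          rw [← hrs a ha.1, ← hrs b' hb'.1, hab]
        have hmaps : ∀ t ∈ (Finset.Icc 1 (n - 1)).filter (fun t => σ₁ (s t) = j),
            s t ∈ S.filter (fun x => σ₁ x = j) := by
          intro t ht
          simp only [Finset.mem_filter] at ht ⊢
          exact ⟨hs_mem t ht.1, ht.2⟩
        calc ((Finset.Icc 1 (n - 1)).filter (fun t => σ₁ (s t) = j)).card
            ≤ (S.filter (fun x => σ₁ x = j)).card :=
              Finset.card_le_card_of_injOn s hmaps hinj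
          _ ≤ c j := hσ₁c j
  -- Step D : arithmetic identity
  have hsplit1 : ∑ t ∈ Finset.Icc 1 n, v t * l (Ef c t)
      = ∑ t ∈ Finset.Ico 1 u, v t * l (Ef c t) + (v u * l (Ef c u)
        + ∑ t ∈ Finset.Ico (u + 1) (n + 1), v t * l (Ef c t)) := by
    rw [← Finset.Ico_add_one_right_eq_Icc 1 n,
        ← Finset.sum_Ico_consecutive (fun t => v t * l (Ef c t))
          (show 1 ≤ u by omega) (show u ≤ n + 1 by omega),
        ← Finset.sum_Ico_consecutive (fun t => v t * l (Ef c t))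
          (show u ≤ u + 1 by omega) (show u + 1 ≤ n + 1 by omega)]
    congr 1
    rw [Nat.Ico_succ_singleton, Finset.sum_singleton]
  have hIccIco : Finset.Icc 1 (n - 1) = Finset.Ico 1 n := by
    rw [← Finset.Ico_add_one_right_eq_Icc]
    congr 1
    omega
  have hsplit2 : ∑ t ∈ Finset.Icc 1 (n - 1), v (s t) * l (Ef c t)
      = ∑ t ∈ Finset.Ico 1 u, v t * l (Ef c t)
        + ∑ t ∈ Finset.Ico u n, v (t + 1) * l (Ef c t) := by
    rw [hIccIco,
        ← Finset.sum_Ico_consecutive (fun t => v (s t) * l (Ef c t))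
          (show 1 ≤ u by omega) (show u ≤ n by omega)]
    congr 1
    · apply Finset.sum_congr rfl
      intro t ht
      have ht' := Finset.mem_Ico.mp ht
      simp only [hsdef]
      rw [if_pos ht'.2]
    · apply Finset.sum_congr rfl
      intro t ht
      have ht' := Finset.mem_Ico.mp ht
      simp only [hsdef]
      rw [if_neg (by omega)]
  have hsplit3 : ∑ t ∈ Finset.Ico u n, v (t + 1) * l (Ef c t)
      = ∑ t ∈ Finset.Ico (u + 1) (n + 1), v t * l (Ef c (t - 1)) := by
    rw [show Finset.Ico (u + 1) (n + 1) = (Finset.Ico u n).map (addRightEmbedding 1) from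
        (Finset.map_add_right_Ico u n 1).symm,
      Finset.sum_map]
    apply Finset.sum_congr rfl
    intro t ht
    simp [addRightEmbedding]
  have hkey : ∑ t ∈ Finset.Ico (u + 1) (n + 1), v t * l (Ef c t)
      - ∑ t ∈ Finset.Ico (u + 1) (n + 1), v t * l (Ef c (t - 1))
      = ∑ t ∈ Finset.Ico (u + 1) (n + 1), v t * (l (Ef c t) - l (Ef c (t - 1))) := by
    rw [← Finset.sum_sub_distrib]
    apply Finset.sum_congr rfl
    intro t _
    ring
  -- D4 : boundary sum identity
  have hEu_le : ∀ {x j : ℕ}, x ≤ Cf c j → Ef c x ≤ j := fun h => Ef_le h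
  have hD4 : ∑ t ∈ Finset.Ico (u + 1) (n + 1), v t * (l (Ef c t) - l (Ef c (t - 1)))
      = ∑ j ∈ Finset.Ico (Ef c u) m, v (Cf c j + 1) * (l (j + 1) - l j) := by
    have hsub : Finset.image (fun j => Cf c j + 1) (Finset.Ico (Ef c u) m)
        ⊆ Finset.Ico (u + 1) (n + 1) := by
      intro x hx
      obtain ⟨j, hj, hje⟩ := Finset.mem_image.mp hx
      have hj' := Finset.mem_Ico.mp hj
      rw [Finset.mem_Ico, ← hje]
      constructor
      · have huE : u ≤ Cf c (Ef c u) := le_Cf_Ef (le_trans hun hnCm)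
        have := Cf_mono (c := c) hj'.1
        omega
      · have h1 : Cf c j ≤ Cf c (m - 1) := Cf_mono (by omega)
        have h2 : Cf c (m - 1) < n := by
          have heq : Finset.Ico 1 m = Finset.Icc 1 (m - 1) := by
            rw [← Finset.Ico_add_one_right_eq_Icc]
            congr 1
            omega
          rw [heq] at hlow
          exact hlow
        omega
    have hinj : ∀ j₁ ∈ Finset.Ico (Ef c u) m, ∀ j₂ ∈ Finset.Ico (Ef c u) m,
        Cf c j₁ + 1 = Cf c j₂ + 1 → j₁ = j₂ := by
      have key : ∀ a b' : ℕ, a < b' → b' < m → Cf c a < Cf c b' := by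
        intro a b' hab hbm
        have h1 : Cf c (a + 1) = Cf c a + c (a + 1) := Cf_succ a
        have h2 : 1 ≤ c (a + 1) := hc_pos (a + 1) (by omega) (by omega)
        have h3 : Cf c (a + 1) ≤ Cf c b' := Cf_mono (by omega)
        omega
      intro j₁ h₁ j₂ h₂ heq
      have h₁' := Finset.mem_Ico.mp h₁
      have h₂' := Finset.mem_Ico.mp h₂
      by_contra hne
      rcases Nat.lt_or_ge j₁ j₂ with hlt | hge
      · have := key j₁ j₂ hlt h₂'.2
        omega
      · have hlt : j₂ < j₁ := by omega
        have := key j₂ j₁ hlt h₁'.2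
        omega
    have hvan : ∀ t ∈ Finset.Ico (u + 1) (n + 1),
        t ∉ Finset.image (fun j => Cf c j + 1) (Finset.Ico (Ef c u) m) →
        v t * (l (Ef c t) - l (Ef c (t - 1))) = 0 := by
      intro t ht hnot
      have ht' := Finset.mem_Ico.mp ht
      have ht1 : 1 ≤ t := by omega
      have htn : t ≤ n := by omega
      have htC : t ≤ Cf c m := le_trans htn hnCm
      have hj1 : 1 ≤ Ef c t := Ef_pos ht1 htC
      have hlo : Cf c (Ef c t - 1) < t := Cf_pred_lt ht1 htC
      have hhi : t ≤ Cf c (Ef c t) := le_Cf_Ef htC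
      have hjm : Ef c t ≤ m := Ef_le htC
      have hne : t ≠ Cf c (Ef c t - 1) + 1 := by
        intro heq
        apply hnot
        apply Finset.mem_image.mpr
        refine ⟨Ef c t - 1, Finset.mem_Ico.mpr ⟨?_, by omega⟩, heq.symm⟩
        · apply Ef_le
          omega
      have hEt1 : Ef c (t - 1) = Ef c t := Ef_eq hj1 (by omega) (by omega)
      rw [hEt1]
      simp
    rw [← Finset.sum_subset hsub hvan, Finset.sum_image hinj]
    apply Finset.sum_congr rfl
    intro j hj
    have hj' := Finset.mem_Ico.mp hj
    have hj1 : 1 ≤ j := le_trans (by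
      have := Ef_pos (c := c) hu1 (le_trans hun hnCm)
      omega) hj'.1
    have hE1 : Ef c (Cf c j + 1) = j + 1 := by
      apply Ef_eq (by omega)
      · simp only [Nat.add_sub_cancel]
        omega
      · have h1 : Cf c (j + 1) = Cf c j + c (j + 1) := Cf_succ j
        have h2 : 1 ≤ c (j + 1) := hc_pos (j + 1) (by omega) (by omega)
        omega
    have hE0 : Ef c (Cf c j + 1 - 1) = j := by
      simp only [Nat.add_sub_cancel]
      apply Ef_eq hj1 _ (le_refl _)
      have h1 : Cf c j = Cf c (j - 1) + c j := Cf_pred hj1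
      have h2 : 1 ≤ c j := hc_pos j hj1 (by omega)
      omega
    rw [hE1, hE0]
  -- assemble
  rw [hB]
  rw [hC]
  rw [hsplit1, hsplit2, hsplit3]
  have hfinal : ∑ j ∈ Finset.Ico (σstar u) m, v (b j) * (l (j + 1) - l j)
      = ∑ j ∈ Finset.Ico (Ef c u) m, v (Cf c j + 1) * (l (j + 1) - l j) := by
    rw [hEu]
    apply Finset.sum_congr rfl
    intro j _
    have : b j = Cf c j + 1 := by
      rw [hb j]
      show 1 + Cf c j = Cf c j + 1
      omega
    rw [this]
  rw [hfinal, ← hD4, ← hkey, hEu]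
  ring
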